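/- The subspace K(F_n) of bounded counting functions on the free group F_n is spanned by the extension relations {l_w, r_w : w ∈ F_n}, where l_w = p_w - Σ_{s ∈ S̄, s ≠ w_1^{-1}} p_{sw} and r_w = p_w - Σ_{s ∈ S̄, s ≠ w_fin^{-1}} p_{ws}. -/

import Mathlib

open List Finset

/-- Number of occurrences of `w` as a contiguous subword of `v`. -/
def occ {α : Type*} [DecidableEq α] (w v : List α) : ℕ :=
  ((List.range (v.length + 1 - w.length)).filter (fun i => decide (w <+: v.drop i))).length

/-- Elementary counting function, with the convention `p_ε(v) = |v|`. -/
def cnt {α : Type*} [DecidableEq α] (w v : List α) : ℚ :=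
  if w = [] then v.length else occ w v

/-- The inverse of a letter of `S̄`: letters are pairs (generator, sign). -/
def invL {n : ℕ} (a : Fin n × Bool) : Fin n × Bool := (a.1, !a.2)

/-- The inverse of a (reduced) word. -/
def invW {n : ℕ} (w : List (Fin n × Bool)) : List (Fin n × Bool) := (w.map invL).reverse

def redB {n : ℕ} : List (Fin n × Bool) → Bool
  | a :: b :: t => decide (b ≠ invL a) && redB (b :: t)
  | _ => true

/-- A word over `S̄` is reduced if no letter is followed by its inverse. -/
def Red {n : ℕ} (w : List (Fin n × Bool)) : Prop := redB w = true

instance {n : ℕ} : DecidablePred (Red (n := n)) := fun _ => instDecidableEqBool _ _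

/-- Left extension relation `l_w = p_w - Σ_{s : sw reduced} p_{sw}`. -/
def lgrp {n : ℕ} (w v : List (Fin n × Bool)) : ℚ :=
  cnt w v - ∑ s ∈ Finset.univ.filter (fun s => Red (s :: w)), cnt (s :: w) v

/-- Right extension relation `r_w = p_w - Σ_{s : ws reduced} p_{ws}`. -/
def rgrp {n : ℕ} (w v : List (Fin n × Bool)) : ℚ :=
  cnt w v - ∑ s ∈ Finset.univ.filter (fun s => Red (w ++ [s])), cnt (w ++ [s]) v

/-- The map `σ₁` sending a function on F_n to `f - f ∘ (·⁻¹)`; on counting functions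
it sends `p_w` to the Brooks quasimorphism `φ_w = p_w - p_{w⁻¹}`. -/
def sig1 {n : ℕ} (f : List (Fin n × Bool) → ℚ) : List (Fin n × Bool) → ℚ :=
  fun v => f v - f (invW v)



lemma occ_nil {α : Type*} [DecidableEq α] (w : List α) :
    occ w [] = if w = [] then 1 else 0 := by
  rcases eq_or_ne w [] with h | h
  · subst h; simp [occ]
  · have : w.length ≠ 0 := by simpa using h
    simp only [occ, List.length_nil]
    rw [if_neg h]
    have h0 : 0 + 1 - w.length = 0 := by omega
    simp [h0]

lemma occ_eq_zero_of_lt {α : Type*} [DecidableEq α] {w v : List α} (h : v.length < w.length) :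
    occ w v = 0 := by
  have : v.length + 1 - w.length = 0 := by omega
  simp [occ, this]

lemma prefix_iff_eq_of_le {α : Type*} {w L : List α} (h : L.length ≤ w.length) :
    w <+: L ↔ w = L := by
  constructor
  · intro hp; exact hp.eq_of_length (le_antisymm hp.length_le h)
  · rintro rfl; exact List.prefix_refl _

lemma suffix_iff_eq_of_le {α : Type*} {w L : List α} (h : L.length ≤ w.length) :
    w <:+ L ↔ w = L := by
  constructor
  · intro hp; exact hp.eq_of_length (le_antisymm hp.length_le h)
  · rintro rfl; exact List.suffix_refl _

lemma occ_eq_of_length_eq {α : Type*} [DecidableEq α] {w v : List α} (h : w.length = v.length) :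
    occ w v = if w = v then 1 else 0 := by
  have h1 : v.length + 1 - w.length = 1 := by omega
  simp only [occ, h1]
  have hr : (List.range 1) = [0] := rfl
  rw [hr]
  by_cases hwv : w = v
  · subst hwv; simp [List.filter_cons]
  · have hnp : ¬ (w <+: v) := by rw [prefix_iff_eq_of_le h.symm.le]; exact hwv
    simp [List.filter_cons, hnp, hwv]

lemma occ_cons {α : Type*} [DecidableEq α] (w v : List α) (a : α) :
    occ w (a :: v) = (if w <+: (a :: v) then 1 else 0) + occ w v := by
  rcases le_or_gt w.length (v.length + 1) with h | h
  · have h2 : (a :: v).length + 1 - w.length = (v.length + 1 - w.length) + 1 := by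
      simp only [List.length_cons]; omega
    simp only [occ, h2, List.range_succ_eq_map]
    rw [List.filter_cons]
    simp only [List.drop_zero]
    have hmap : (List.filter (fun i => decide (w <+: (a :: v).drop i)) ((List.range (v.length + 1 - w.length)).map Nat.succ)).length
        = occ w v := by
      rw [List.filter_map, List.length_map]
      unfold occ
      congr 1
    rcases Decidable.em (w <+: a :: v) with hp | hp
    · simp [hp, hmap, occ, Nat.add_comm]
    · simp [hp, hmap, occ]
  · have h1 : occ w v = 0 := occ_eq_zero_of_lt (by omega)
    have h2 : occ w (a :: v) = 0 := occ_eq_zero_of_lt (by simp; omega)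
    have h3 : ¬ w <+: a :: v := fun hp => by have := hp.length_le; simp at this; omega
    simp [h1, h2, h3]


lemma suffix_iff_of_suffix_le {α : Type*} {w z z' : List α} (hz : z <:+ z')
    (hl : w.length ≤ z.length) : (w <:+ z ↔ w <:+ z') :=
  ⟨fun h => h.trans hz, fun h => List.suffix_of_suffix_length_le h hz hl⟩

lemma prefix_iff_of_prefix_le {α : Type*} {w z z' : List α} (hz : z <+: z')
    (hl : w.length ≤ z.length) : (w <+: z ↔ w <+: z') :=
  ⟨fun h => h.trans hz, fun h => List.prefix_of_prefix_length_le h hz hl⟩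

lemma occ_snoc {α : Type*} [DecidableEq α] (w : List α) (a : α) :
    ∀ z : List α, occ w (z ++ [a]) = occ w z + (if w <:+ z ++ [a] then 1 else 0) := by
  intro z
  induction z with
  | nil =>
    simp only [List.nil_append]
    rw [show ([a] : List α) = a :: [] from rfl, occ_cons, occ_nil]
    have h1 : (w <+: [a]) ↔ (w = [] ∨ w = [a]) := by
      cases w with
      | nil => simp
      | cons b t => simp [List.cons_prefix_cons, List.prefix_nil]
    have h2 : (w <:+ [a]) ↔ (w = [] ∨ w = [a]) := by
      rw [List.suffix_cons_iff]; simp [List.suffix_nil, or_comm]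
    rw [if_congr (h1.trans h2.symm) rfl rfl]
    omega
  | cons b z ih =>
    simp only [List.cons_append]
    rw [occ_cons, ih, occ_cons]
    have hza : (z ++ [a]).length = z.length + 1 := by simp
    have hbza : (b :: (z ++ [a])).length = z.length + 2 := by simp
    have key : (if w <+: b :: (z ++ [a]) then 1 else 0) + (if w <:+ z ++ [a] then 1 else 0)
        = (if w <+: b :: z then 1 else 0) + (if w <:+ b :: (z ++ [a]) then 1 else 0) := by
      rcases le_or_gt w.length (z.length + 1) with h | h
      · have e1 : (w <+: b :: (z ++ [a])) ↔ (w <+: b :: z) :=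
          (prefix_iff_of_prefix_le (z := b :: z) (z' := b :: (z ++ [a])) ⟨[a], by simp⟩
            (by simp only [List.length_cons]; omega)).symm
        have e2 : (w <:+ z ++ [a]) ↔ (w <:+ b :: (z ++ [a])) :=
          suffix_iff_of_suffix_le (z := z ++ [a]) (z' := b :: (z ++ [a])) ⟨[b], by simp⟩
            (by rw [hza]; omega)
        rw [if_congr e1 rfl rfl, if_congr e2 rfl rfl]
      · have h1 : ¬ w <+: b :: z := fun hp => by
          have := hp.length_le; simp only [List.length_cons] at this; omega
        have h2 : ¬ w <:+ z ++ [a] := fun hp => by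
          have := hp.length_le; rw [hza] at this; omega
        have e1 : (w <+: b :: (z ++ [a])) ↔ w = b :: (z ++ [a]) := by
          rcases le_or_gt w.length (z.length + 2) with h' | h'
          · exact prefix_iff_eq_of_le (by rw [hbza]; omega)
          · constructor
            · intro hp; have := hp.length_le
              rw [hbza] at this; omega
            · rintro rfl
              rw [hbza] at h'
        have e2 : (w <:+ b :: (z ++ [a])) ↔ w = b :: (z ++ [a]) := by
          rcases le_or_gt w.length (z.length + 2) with h' | h'
          · exact suffix_iff_eq_of_le (by rw [hbza]; omega)
          · constructor
            · intro hp; have := hp.length_le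
              rw [hbza] at this; omega
            · rintro rfl
              rw [hbza] at h'
        rw [if_neg h1, if_neg h2, if_congr e1 rfl rfl, if_congr e2 rfl rfl]
        omega
    omega


lemma snoc_suffix_snoc {α : Type*} {w v : List α} {s a : α} :
    w ++ [s] <:+ v ++ [a] ↔ s = a ∧ w <:+ v := by
  rw [← List.reverse_prefix]
  simp only [List.reverse_append, List.reverse_singleton, List.singleton_append]
  rw [List.cons_prefix_cons, List.reverse_prefix]

lemma occ_left_rel {α : Type*} [DecidableEq α] [Fintype α] {w : List α} (hw : w ≠ []) (v : List α) :
    occ w v = (if w <+: v then 1 else 0) + ∑ s : α, occ (s :: w) v := by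
  induction v with
  | nil =>
    rw [occ_nil, if_neg hw]
    have : ¬ (w <+: []) := fun h => hw (List.prefix_nil.mp h)
    simp [this, occ_nil]
  | cons a v ih =>
    rw [occ_cons, ih]
    have hsum : ∀ s : α, occ (s :: w) (a :: v) = (if s = a ∧ w <+: v then 1 else 0) + occ (s :: w) v := by
      intro s
      rw [occ_cons, if_congr List.cons_prefix_cons rfl rfl]
    rw [Finset.sum_congr rfl (fun s _ => hsum s), Finset.sum_add_distrib]
    have : ∑ s : α, (if s = a ∧ w <+: v then (1:ℕ) else 0) = if w <+: v then 1 else 0 := by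
      by_cases hv : w <+: v
      · simp [hv]
      · simp [hv]
    rw [this]

lemma occ_right_rel {α : Type*} [DecidableEq α] [Fintype α] {w : List α} (hw : w ≠ []) (v : List α) :
    occ w v = (if w <:+ v then 1 else 0) + ∑ s : α, occ (w ++ [s]) v := by
  induction v using List.reverseRecOn with
  | nil =>
    rw [occ_nil, if_neg hw]
    have : ¬ (w <:+ []) := fun h => hw (List.suffix_nil.mp h)
    simp [this, occ_nil]
  | append_singleton v a ih =>
    rw [occ_snoc, ih]
    have hsum : ∀ s : α, occ (w ++ [s]) (v ++ [a]) = occ (w ++ [s]) v + (if s = a ∧ w <:+ v then 1 else 0) := by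
      intro s
      rw [occ_snoc, if_congr snoc_suffix_snoc rfl rfl]
    rw [Finset.sum_congr rfl (fun s _ => hsum s), Finset.sum_add_distrib]
    have : ∑ s : α, (if s = a ∧ w <:+ v then (1:ℕ) else 0) = if w <:+ v then 1 else 0 := by
      by_cases hv : w <:+ v
      · simp [hv]
      · simp [hv]
    rw [this]
    omega

lemma sum_occ_singleton {α : Type*} [DecidableEq α] [Fintype α] (v : List α) :
    ∑ s : α, occ [s] v = v.length := by
  induction v with
  | nil => simp [occ_nil]
  | cons a v ih =>
    have h : ∀ s : α, occ [s] (a :: v) = (if s = a then 1 else 0) + occ [s] v := by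
      intro s
      rw [occ_cons]
      congr 1
      rw [if_congr (show ([s] <+: a :: v) ↔ s = a by rw [List.cons_prefix_cons]; simp) rfl rfl]
    rw [Finset.sum_congr rfl (fun s _ => h s), Finset.sum_add_distrib, ih]
    simp [Nat.add_comm]

lemma occ_split {α : Type*} [DecidableEq α] {w x s : List α} (y : List α) (hs : s <:+ x)
    (hl : w.length ≤ s.length + 1) :
    occ w (x ++ y) + occ w s = occ w x + occ w (s ++ y) := by
  induction y using List.reverseRecOn with
  | nil => simp
  | append_singleton y a ih =>
    rw [← List.append_assoc, ← List.append_assoc, occ_snoc, occ_snoc]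
    have hsuf : (s ++ y) ++ [a] <:+ (x ++ y) ++ [a] := by
      obtain ⟨p, rfl⟩ := hs
      exact ⟨p, by simp [List.append_assoc]⟩
    have hind : (w <:+ (x ++ y) ++ [a]) ↔ (w <:+ (s ++ y) ++ [a]) := by
      refine (suffix_iff_of_suffix_le hsuf ?_).symm
      simp only [List.length_append, List.length_singleton]
      omega
    rw [if_congr hind rfl rfl]
    omega


section RedLemmas
variable {n : ℕ}
abbrev Rl {n : ℕ} (a b : Fin n × Bool) : Prop := b ≠ invL a

lemma red_iff_chain' (w : List (Fin n × Bool)) : Red w ↔ List.IsChain Rl w := by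
  induction w with
  | nil => simp [Red, redB]
  | cons a t ih =>
    cases t with
    | nil => simp [Red, redB]
    | cons b t =>
      rw [List.isChain_cons_cons, ← ih]
      simp only [Red, redB, Bool.and_eq_true, decide_eq_true_eq]

lemma red_nil : Red ([] : List (Fin n × Bool)) := by simp [Red, redB]
lemma red_singleton (a : Fin n × Bool) : Red [a] := by simp [Red, redB]

lemma Red.infix {w v : List (Fin n × Bool)} (hv : Red v) (h : w <:+: v) : Red w :=
  (red_iff_chain' w).mpr (((red_iff_chain' v).mp hv).infix h)

lemma occ_zero_of_not_red {w v : List (Fin n × Bool)} (hv : Red v) (hw : ¬ Red w) :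
    occ w v = 0 := by
  rw [occ, List.length_eq_zero_iff]
  rw [List.filter_eq_nil_iff]
  intro i _
  simp only [decide_eq_true_eq]
  intro hp
  exact hw (hv.infix (hp.isInfix.trans (List.drop_suffix i v).isInfix))

lemma invL_invL (a : Fin n × Bool) : invL (invL a) = a := by simp [invL]

lemma rl_comm {a b : Fin n × Bool} : Rl a b ↔ Rl b a := by
  unfold Rl
  constructor
  · intro h hc; exact h (by rw [hc, invL_invL])
  · intro h hc; exact h (by rw [hc, invL_invL])

lemma rl_self (a : Fin n × Bool) : Rl a a := by
  simp only [Rl, invL, ne_eq]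
  intro h
  have := congrArg Prod.snd h
  simp at this

-- cnt as occ
lemma cnt_eq_occ {w : List (Fin n × Bool)} (hw : w ≠ []) (v : List (Fin n × Bool)) :
    cnt w v = occ w v := if_neg hw

lemma lgrp_eq {w : List (Fin n × Bool)} (hw : Red w) {v : List (Fin n × Bool)} (hv : Red v) :
    lgrp w v = if w = [] then 0 else (if w <+: v then 1 else 0) := by
  rcases eq_or_ne w [] with rfl | hne
  · simp only [lgrp, if_pos rfl]
    have hfil : (Finset.univ.filter (fun s : Fin n × Bool => Red [s])) = Finset.univ := by
      apply Finset.filter_true_of_mem; intro s _; exact red_singleton s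
    rw [if_pos trivial, hfil]
    have : ∀ s : Fin n × Bool, cnt [s] v = (occ [s] v : ℚ) := fun s => cnt_eq_occ (by simp) v
    rw [Finset.sum_congr rfl (fun s _ => this s), ← Nat.cast_sum, sum_occ_singleton]
    simp [cnt]
  · rw [if_neg hne]
    simp only [lgrp, cnt_eq_occ hne]
    have hrel := occ_left_rel (α := Fin n × Bool) hne v
    have hzero : ∀ s ∈ Finset.univ \ Finset.univ.filter (fun s : Fin n × Bool => Red (s :: w)),
        occ (s :: w) v = 0 := by
      intro s hs
      simp only [Finset.mem_sdiff, Finset.mem_filter, Finset.mem_univ, true_and, not_and] at hs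
      exact occ_zero_of_not_red hv (by tauto)
    have hsum : ∑ s ∈ Finset.univ.filter (fun s : Fin n × Bool => Red (s :: w)), occ (s :: w) v
        = ∑ s : Fin n × Bool, occ (s :: w) v := by
      apply Finset.sum_subset (Finset.filter_subset _ _)
      intro s _ hs
      exact hzero s (by simp_all)
    have : ∀ s ∈ Finset.univ.filter (fun s : Fin n × Bool => Red (s :: w)),
        cnt (s :: w) v = (occ (s :: w) v : ℚ) := fun s _ => cnt_eq_occ (by simp) v
    rw [Finset.sum_congr rfl this, ← Nat.cast_sum, hsum]
    rw [hrel]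
    push_cast
    split <;> ring

lemma rgrp_eq {w : List (Fin n × Bool)} (hw : Red w) {v : List (Fin n × Bool)} (hv : Red v) :
    rgrp w v = if w = [] then 0 else (if w <:+ v then 1 else 0) := by
  rcases eq_or_ne w [] with rfl | hne
  · simp only [rgrp, if_pos rfl]
    have hfil : (Finset.univ.filter (fun s : Fin n × Bool => Red ([] ++ [s]))) = Finset.univ := by
      apply Finset.filter_true_of_mem; intro s _; exact red_singleton s
    rw [if_pos trivial, hfil]
    have : ∀ s : Fin n × Bool, cnt ([] ++ [s]) v = (occ [s] v : ℚ) := fun s => cnt_eq_occ (by simp) v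
    rw [Finset.sum_congr rfl (fun s _ => this s), ← Nat.cast_sum, sum_occ_singleton]
    simp [cnt]
  · rw [if_neg hne]
    simp only [rgrp, cnt_eq_occ hne]
    have hrel := occ_right_rel (α := Fin n × Bool) hne v
    have hsum : ∑ s ∈ Finset.univ.filter (fun s : Fin n × Bool => Red (w ++ [s])), occ (w ++ [s]) v
        = ∑ s : Fin n × Bool, occ (w ++ [s]) v := by
      apply Finset.sum_subset (Finset.filter_subset _ _)
      intro s _ hs
      simp only [Finset.mem_filter, Finset.mem_univ, true_and] at hs
      exact occ_zero_of_not_red hv hs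
    have : ∀ s ∈ Finset.univ.filter (fun s : Fin n × Bool => Red (w ++ [s])),
        cnt (w ++ [s]) v = (occ (w ++ [s]) v : ℚ) := fun s _ => cnt_eq_occ (by simp) v
    rw [Finset.sum_congr rfl this, ← Nat.cast_sum, hsum]
    rw [hrel]
    push_cast
    split <;> ring

lemma abs_lgrp_le {w : List (Fin n × Bool)} (hw : Red w) {v : List (Fin n × Bool)} (hv : Red v) :
    |lgrp w v| ≤ 1 := by
  rw [lgrp_eq hw hv]
  split
  · simp
  · split <;> simp

lemma abs_rgrp_le {w : List (Fin n × Bool)} (hw : Red w) {v : List (Fin n × Bool)} (hv : Red v) :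
    |rgrp w v| ≤ 1 := by
  rw [rgrp_eq hw hv]
  split
  · simp
  · split <;> simp

end RedLemmas


section Alphabet
variable {n : ℕ}

lemma exists_avoid2 (hn : 2 ≤ n) (x y : Fin n × Bool) : ∃ c : Fin n × Bool, c ≠ x ∧ c ≠ y := by
  have hcard : 4 ≤ Fintype.card (Fin n × Bool) := by
    rw [Fintype.card_prod, Fintype.card_fin, Fintype.card_bool]; omega
  have h2 : ({x, y} : Finset (Fin n × Bool)).card ≤ 2 := by
    apply le_trans (Finset.card_insert_le _ _)
    simp
  have hne : (({x, y} : Finset (Fin n × Bool))ᶜ).Nonempty := by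
    rw [← Finset.card_pos, Finset.card_compl]
    omega
  obtain ⟨c, hc⟩ := hne
  simp only [Finset.mem_compl, Finset.mem_insert, Finset.mem_singleton, not_or] at hc
  exact ⟨c, hc.1, hc.2⟩

lemma exists_bridge (hn : 2 ≤ n) (a b : Fin n × Bool) :
    ∃ B : List (Fin n × Bool), Red B ∧ B ≠ [] ∧
      (∀ c ∈ B.head?, Rl a c) ∧ (∀ d ∈ B.getLast?, Rl d b) := by
  obtain ⟨c, hc1, -⟩ := exists_avoid2 hn (invL a) (invL a)
  obtain ⟨d, hd1, hd2⟩ := exists_avoid2 hn (invL c) (invL b)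
  refine ⟨[c, d], ?_, by simp, ?_, ?_⟩
  · rw [red_iff_chain']
    exact List.isChain_pair.mpr hd1
  · intro c' hc'
    simp only [List.head?_cons, Option.mem_some_iff] at hc'
    subst hc'; exact hc1
  · intro d' hd'
    simp only [List.getLast?] at hd'
    simp at hd'
    subst hd'
    exact rl_comm.mp hd2

lemma red_replicate (k : ℕ) (a : Fin n × Bool) : Red (List.replicate k a) := by
  rw [red_iff_chain']
  induction k with
  | zero => simp
  | succ k ih =>
    rw [List.replicate_succ]
    cases k with
    | zero => simp
    | succ m =>
      rw [List.replicate_succ, List.isChain_cons_cons, ← List.replicate_succ]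
      exact ⟨rl_self a, ih⟩

lemma getLast?_of_suffix {α : Type*} {s l : List α} (h : s <:+ l) (hs : s ≠ []) :
    l.getLast? = s.getLast? := by
  obtain ⟨p, rfl⟩ := h
  rw [List.getLast?_append]
  cases hsl : s.getLast? with
  | none => exact absurd (List.getLast?_eq_none_iff.mp hsl) hs
  | some a => simp

lemma head?_of_prefix {α : Type*} {s l : List α} (h : s <+: l) (hs : s ≠ []) :
    l.head? = s.head? := by
  obtain ⟨p, rfl⟩ := h
  cases s with
  | nil => exact absurd rfl hs
  | cons a t => simp

end Alphabet

section TKR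
variable {α : Type*}

def tkr (k : ℕ) (l : List α) : List α := l.drop (l.length - k)

lemma tkr_suffix (k : ℕ) (l : List α) : tkr k l <:+ l := List.drop_suffix _ _

lemma tkr_length {k : ℕ} {l : List α} (h : k ≤ l.length) : (tkr k l).length = k := by
  simp [tkr]; omega

lemma tkr_append {k : ℕ} (x : List α) {y : List α} (h : k ≤ y.length) :
    tkr k (x ++ y) = tkr k y := by
  unfold tkr
  rw [List.length_append, show x.length + y.length - k = x.length + (y.length - k) by omega,
    List.drop_append]
  simp

lemma tkr_append_self (x s : List α) : tkr s.length (x ++ s) = s := by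
  rw [tkr_append x le_rfl]
  simp [tkr]

end TKR

section GG
variable {n N : ℕ} (μ : List (Fin n × Bool) → ℚ)

def WL (n m : ℕ) : Finset (List (Fin n × Bool)) :=
  ((Finset.univ : Finset (Fin m → Fin n × Bool)).image List.ofFn).filter (fun l => Red l)

lemma mem_WL {m : ℕ} {l : List (Fin n × Bool)} : l ∈ WL n m ↔ l.length = m ∧ Red l := by
  unfold WL
  rw [Finset.mem_filter]
  constructor
  · rintro ⟨h1, h2⟩
    refine ⟨?_, h2⟩
    simp only [Finset.mem_image] at h1
    obtain ⟨f, -, rfl⟩ := h1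
    simp
  · rintro ⟨h1, h2⟩
    refine ⟨?_, h2⟩
    simp only [Finset.mem_image]
    subst h1
    exact ⟨l.get, Finset.mem_univ _, List.ofFn_get l⟩

def GG (n N : ℕ) (μ : List (Fin n × Bool) → ℚ) (v : List (Fin n × Bool)) : ℚ :=
  ∑ w ∈ WL n N, μ w * (occ w v : ℚ)

lemma GG_short {v : List (Fin n × Bool)} (hv : v.length < N) : GG n N μ v = 0 := by
  apply Finset.sum_eq_zero
  intro w hw
  rw [occ_eq_zero_of_lt (by rw [(mem_WL.mp hw).1]; exact hv)]
  simp

lemma GG_single {w : List (Fin n × Bool)} (hw : Red w) (hl : w.length = N) :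
    GG n N μ w = μ w := by
  unfold GG
  rw [Finset.sum_eq_single w]
  · rw [occ_eq_of_length_eq rfl]; simp
  · intro w' hw' hne
    rw [occ_eq_of_length_eq (by rw [(mem_WL.mp hw').1, hl])]
    simp [hne]
  · intro hww
    exact absurd (mem_WL.mpr ⟨hl, hw⟩) hww

lemma GG_split {x s : List (Fin n × Bool)} (y : List (Fin n × Bool)) (hs : s <:+ x)
    (hl : N ≤ s.length + 1) :
    GG n N μ (x ++ y) + GG n N μ s = GG n N μ x + GG n N μ (s ++ y) := by
  unfold GG
  rw [← Finset.sum_add_distrib, ← Finset.sum_add_distrib]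
  apply Finset.sum_congr rfl
  intro w hw
  have hocc := occ_split (w := w) y hs (by rw [(mem_WL.mp hw).1]; exact hl)
  have : ((occ w (x ++ y) : ℚ) + occ w s) = (occ w x : ℚ) + occ w (s ++ y) := by
    exact_mod_cast congrArg (Nat.cast : ℕ → ℚ) hocc
  rw [← mul_add, ← mul_add, this]

lemma eq_zero_of_abs_add_nsmul_le {x E C : ℚ} (h : ∀ k : ℕ, |x + k * E| ≤ C) : E = 0 := by
  by_contra hE
  obtain ⟨k, hk⟩ := exists_nat_gt ((C + |x|) / |E|)
  have hEpos : 0 < |E| := abs_pos.mpr hE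
  have hk' : C + |x| < k * |E| := (div_lt_iff₀ hEpos).mp hk
  have h1 : |(k : ℚ) * E| ≤ |x + k * E| + |x| := by
    calc |(k : ℚ) * E| = |(x + k * E) - x| := by ring_nf
    _ ≤ |x + k * E| + |x| := abs_sub _ _
  rw [abs_mul, Nat.abs_cast] at h1
  have := h k
  linarith

lemma loop_zero (C : ℚ) (hb : ∀ v, Red v → |GG n N μ v| ≤ C) (hN : 2 ≤ N)
    (v L : List (Fin n × Bool)) (hv : Red v) (hvlen : N - 1 ≤ v.length)
    (hLlen : N - 1 ≤ L.length) (hLtkr : tkr (N-1) L = tkr (N-1) v)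
    (hstep : ∀ z, Red z → z.getLast? = v.getLast? → Red (z ++ L) ∧ (z ++ L).getLast? = v.getLast?) :
    GG n N μ (tkr (N-1) v ++ L) = 0 := by
  set u2 := tkr (N-1) v with hu2
  set E := GG n N μ (u2 ++ L) with hE
  have hu2len : u2.length = N - 1 := tkr_length hvlen
  have hu2short : GG n N μ u2 = 0 := GG_short μ (by omega)
  -- the iterated words
  let z : ℕ → List (Fin n × Bool) := fun k => v ++ (List.replicate k L).flatten
  have hz0 : z 0 = v := by simp [z]
  have hzsucc : ∀ k, z (k+1) = z k ++ L := by
    intro k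
    simp only [z, List.replicate_succ', List.flatten_append]
    simp [List.append_assoc]
  have claim : ∀ k : ℕ, Red (z k) ∧ (z k).getLast? = v.getLast? ∧ tkr (N-1) (z k) = u2 ∧
      GG n N μ (z k) = GG n N μ v + k * E := by
    intro k
    induction k with
    | zero => refine ⟨by rw [hz0]; exact hv, by rw [hz0], by rw [hz0], by rw [hz0]; simp⟩
    | succ k ih =>
      obtain ⟨ih1, ih2, ih3, ih4⟩ := ih
      obtain ⟨hred, hlast⟩ := hstep (z k) ih1 ih2
      refine ⟨by rw [hzsucc]; exact hred, by rw [hzsucc]; exact hlast, ?_, ?_⟩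
      · rw [hzsucc, tkr_append _ hLlen, hLtkr]
      · have hsuf : u2 <:+ z k := by rw [← ih3]; exact tkr_suffix (N-1) (z k)
        have hsplit := GG_split (n := n) (N := N) μ (x := z k) (s := u2) L hsuf (by omega)
        rw [hzsucc]
        rw [hu2short] at hsplit
        push_cast
        rw [show GG n N μ (z k ++ L) = GG n N μ (z k) + GG n N μ (u2 ++ L) by linarith, ih4]
        ring
  have : ∀ k : ℕ, |GG n N μ v + k * E| ≤ C := by
    intro k
    obtain ⟨h1, -, -, h4⟩ := claim k
    rw [← h4]
    exact hb _ h1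
  exact eq_zero_of_abs_add_nsmul_le this

end GG


section KEY
variable {n N : ℕ} (μ : List (Fin n × Bool) → ℚ)

lemma gg_key (hn : 2 ≤ n) (hN : 2 ≤ N) (C : ℚ) (hb : ∀ v, Red v → |GG n N μ v| ≤ C)
    {v v' : List (Fin n × Bool)} (hv : Red v) (hv' : Red v')
    (h1 : N - 1 ≤ v.length) (h1' : N - 1 ≤ v'.length)
    (hpre : v.take (N-1) = v'.take (N-1)) (hsuf : tkr (N-1) v = tkr (N-1) v') :
    GG n N μ v = GG n N μ v' := by
  have hvne : v ≠ [] := by intro h; subst h; simp at h1; omega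
  have hvne' : v' ≠ [] := by intro h; subst h; simp at h1'; omega
  -- common last letter and head
  have hu2ne : tkr (N-1) v ≠ [] := by
    intro h
    have := tkr_length (l := v) (k := N-1) h1
    rw [h] at this; simp at this; omega
  have hlast : v.getLast? = v'.getLast? := by
    rw [getLast?_of_suffix (tkr_suffix (N-1) v) hu2ne,
        getLast?_of_suffix (tkr_suffix (N-1) v') (hsuf ▸ hu2ne), hsuf]
  have hu1ne : v.take (N-1) ≠ [] := by
    intro h
    have : (v.take (N-1)).length = N - 1 := by rw [List.length_take]; omega
    rw [h] at this; simp at this; omega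
  have hhead : v.head? = v'.head? := by
    rw [head?_of_prefix (List.take_prefix (N-1) v) hu1ne,
        head?_of_prefix (List.take_prefix (N-1) v') (hpre ▸ hu1ne), hpre]
  -- bridge
  obtain ⟨a, ha⟩ := Option.isSome_iff_exists.mp
    (show v.getLast?.isSome by rwa [List.getLast?_isSome])
  obtain ⟨b, hb2⟩ := Option.isSome_iff_exists.mp
    (show v.head?.isSome by rwa [List.isSome_head?])
  obtain ⟨B, hBred, hBne, hBhead, hBlast⟩ := exists_bridge hn a b
  obtain ⟨c, hc⟩ := Option.isSome_iff_exists.mp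
    (show B.head?.isSome by rwa [List.isSome_head?])
  -- generic step condition
  have hstepgen : ∀ y, Red y → y.head? = some b → y.getLast? = v.getLast? →
      ∀ z, Red z → z.getLast? = v.getLast? →
      Red (z ++ (B ++ y)) ∧ (z ++ (B ++ y)).getLast? = v.getLast? := by
    intro y hy hyh hyl z hz hzl
    constructor
    · rw [red_iff_chain', List.isChain_append]
      refine ⟨(red_iff_chain' z).mp hz, ?_, ?_⟩
      · rw [List.isChain_append]
        refine ⟨(red_iff_chain' B).mp hBred, (red_iff_chain' y).mp hy, ?_⟩
        intro d hd yh hyh'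
        rw [hyh, Option.mem_some_iff] at hyh'
        subst hyh'
        exact hBlast d hd
      · intro x hx c' hc'
        rw [hzl, ha, Option.mem_some_iff] at hx
        subst hx
        rw [List.head?_append, hc] at hc'
        simp at hc'
        subst hc'
        exact hBhead c hc
    · rw [List.getLast?_append, List.getLast?_append, hyl, ha]
      simp
  have hloop : ∀ y, Red y → y.head? = some b → y.getLast? = v.getLast? → N - 1 ≤ y.length →
      tkr (N-1) y = tkr (N-1) v → GG n N μ (tkr (N-1) v ++ (B ++ y)) = 0 := by
    intro y hy hyh hyl hylen hytkr
    apply loop_zero μ C hb hN v (B ++ y) hv h1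
    · rw [List.length_append]; omega
    · rw [tkr_append _ hylen, hytkr]
    · exact hstepgen y hy hyh hyl
  have hz2 : GG n N μ (tkr (N-1) v ++ (B ++ v)) = 0 := hloop v hv hb2 rfl h1 rfl
  have hz1 : GG n N μ (tkr (N-1) v ++ (B ++ v')) = 0 := by
    apply hloop v' hv' _ hlast.symm h1' hsuf.symm
    rw [← hhead, hb2]
  set u2 := tkr (N-1) v with hu2def
  set t := tkr (N-1) (u2 ++ B) with htdef
  set u1 := v.take (N-1) with hu1def
  have hu2len : u2.length = N - 1 := tkr_length h1
  have htlen : t.length = N - 1 := tkr_length (by rw [List.length_append]; omega)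
  have hu1len : u1.length = N - 1 := by rw [hu1def, List.length_take]; omega
  rw [← List.append_assoc] at hz1 hz2
  have split1 : GG n N μ ((u2 ++ B) ++ v) + GG n N μ t = GG n N μ (u2 ++ B) + GG n N μ (t ++ v) :=
    GG_split (n := n) (N := N) μ v (tkr_suffix _ _) (by omega)
  have split1' : GG n N μ ((u2 ++ B) ++ v') + GG n N μ t = GG n N μ (u2 ++ B) + GG n N μ (t ++ v') :=
    GG_split (n := n) (N := N) μ v' (tkr_suffix _ _) (by omega)
  have htv : GG n N μ (t ++ v) = GG n N μ (t ++ v') := by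
    rw [hz1] at split1'
    rw [hz2] at split1
    linarith
  have hGu1 : GG n N μ u1 = 0 := GG_short μ (by omega)
  have split2 : GG n N μ ((t ++ u1) ++ v.drop (N-1)) + GG n N μ u1
      = GG n N μ (t ++ u1) + GG n N μ (u1 ++ v.drop (N-1)) :=
    GG_split (n := n) (N := N) μ _ (List.suffix_append t u1) (by omega)
  have split2' : GG n N μ ((t ++ v'.take (N-1)) ++ v'.drop (N-1)) + GG n N μ (v'.take (N-1))
      = GG n N μ (t ++ v'.take (N-1)) + GG n N μ (v'.take (N-1) ++ v'.drop (N-1)) :=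
    GG_split (n := n) (N := N) μ _ (List.suffix_append t _) (by rw [List.length_take]; omega)
  rw [List.append_assoc, List.take_append_drop] at split2
  rw [List.append_assoc, List.take_append_drop] at split2'
  rw [← hpre] at split2'
  linarith

end KEY



section MAIN
variable {n N : ℕ}

lemma main_span (hn : 2 ≤ n) (hN : 2 ≤ N) (μ : List (Fin n × Bool) → ℚ) (C : ℚ)
    (hb : ∀ v, Red v → |GG n N μ v| ≤ C) :
    (fun v => GG n N μ v) ∈ Submodule.span ℚ
      ({g : List (Fin n × Bool) → ℚ | ∃ w, Red w ∧ g = lgrp w} ∪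
       {g : List (Fin n × Bool) → ℚ | ∃ w, Red w ∧ g = rgrp w}) := by
  letI : Inhabited (Fin n × Bool) := ⟨(⟨0, by omega⟩, true)⟩
  set u₀ : List (Fin n × Bool) := List.replicate (N-1) default with hu₀def
  have hu₀len : u₀.length = N - 1 := by simp [hu₀def]
  have hu₀ne : u₀ ≠ [] := by
    intro h; rw [h] at hu₀len; simp at hu₀len; omega
  have hu₀red : Red u₀ := red_replicate _ _
  set a₀ := u₀.getLast hu₀ne with ha₀def
  have ha₀ : u₀.getLast? = some a₀ := List.getLast?_eq_getLast hu₀ne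
  set br : (Fin n × Bool) → List (Fin n × Bool) := fun x => (exists_bridge hn a₀ x).choose
    with hbrdef
  have brspec : ∀ x, Red (br x) ∧ br x ≠ [] ∧ (∀ c ∈ (br x).head?, Rl a₀ c) ∧
      (∀ d ∈ (br x).getLast?, Rl d x) := fun x => (exists_bridge hn a₀ x).choose_spec
  set hfun : List (Fin n × Bool) → ℚ :=
    fun u => if hu : u = [] then 0 else GG n N μ ((u₀ ++ br (u.head hu)) ++ u) with hfdef
  -- reducedness of the canonical words
  have hredX : ∀ (x : Fin n × Bool) (y : List (Fin n × Bool)) (hy : y ≠ []), Red y →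
      y.head hy = x → Red ((u₀ ++ br x) ++ y) := by
    intro x y hy hyred hyh
    rw [red_iff_chain', List.append_assoc, List.isChain_append]
    refine ⟨(red_iff_chain' u₀).mp hu₀red, ?_, ?_⟩
    · rw [List.isChain_append]
      refine ⟨(red_iff_chain' _).mp (brspec _).1, (red_iff_chain' y).mp hyred, ?_⟩
      intro d hd yh hyh'
      rw [List.head?_eq_head hy, Option.mem_some_iff] at hyh'
      subst hyh'
      rw [hyh]
      exact (brspec _).2.2.2 d hd
    · intro z hz c hc
      rw [ha₀, Option.mem_some_iff] at hz; subst hz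
      obtain ⟨c', hc'⟩ := Option.isSome_iff_exists.mp
        (show (br x).head?.isSome by rw [List.isSome_head?]; exact (brspec x).2.1)
      rw [List.head?_append, hc'] at hc
      simp at hc
      subst hc
      exact (brspec x).2.2.1 c' hc'
  have htake : ∀ (x : Fin n × Bool) (y : List (Fin n × Bool)),
      ((u₀ ++ br x) ++ y).take (N-1) = u₀ := by
    intro x y
    rw [List.append_assoc, List.take_left' hu₀len]
  have hlenX : ∀ (x : Fin n × Bool) (y : List (Fin n × Bool)), N - 1 ≤ ((u₀ ++ br x) ++ y).length := by
    intro x y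
    rw [List.length_append, List.length_append, hu₀len]; omega
  -- the edge relation
  have hedge : ∀ w, Red w → w.length = N → μ w = hfun (w.drop 1) - hfun (w.take (N-1)) := by
    intro w hwred hwlen
    have hwne : w ≠ [] := by intro h; rw [h] at hwlen; simp at hwlen; omega
    have hπlen : (w.take (N-1)).length = N - 1 := by rw [List.length_take]; omega
    have hσlen : (w.drop 1).length = N - 1 := by rw [List.length_drop]; omega
    have hπne : w.take (N-1) ≠ [] := by
      intro h; rw [h] at hπlen; simp at hπlen; omega
    have hσne : w.drop 1 ≠ [] := by
      intro h; rw [h] at hσlen; simp at hσlen; omega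
    have hπhead : (w.take (N-1)).head hπne = w.head hwne := List.head_take _
    have hπred : Red (w.take (N-1)) := hwred.infix (List.take_prefix _ _).isInfix
    have hσred : Red (w.drop 1) := hwred.infix (List.drop_suffix _ _).isInfix
    have hsplit := GG_split (n := n) (N := N) μ (x := (u₀ ++ br (w.head hwne)) ++ w.take (N-1))
      (s := w.take (N-1)) [w.getLast hwne] (List.suffix_append _ _) (by rw [hπlen]; omega)
    have hw' : w.take (N-1) ++ [w.getLast hwne] = w := by
      have hdl : w.dropLast = w.take (N-1) := by rw [List.dropLast_eq_take, hwlen]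
      rw [← hdl]; exact List.dropLast_append_getLast hwne
    rw [List.append_assoc, hw'] at hsplit
    have hGw : GG n N μ w = μ w := GG_single μ hwred hwlen
    have hGπ : GG n N μ (w.take (N-1)) = 0 := GG_short μ (by omega)
    have hfπ : hfun (w.take (N-1)) = GG n N μ ((u₀ ++ br (w.head hwne)) ++ w.take (N-1)) := by
      rw [hfdef]
      simp only
      rw [dif_neg hπne, hπhead]
    have hfσ : hfun (w.drop 1) = GG n N μ ((u₀ ++ br (w.head hwne)) ++ w) := by
      rw [hfdef]
      simp only
      rw [dif_neg hσne]
      apply gg_key μ hn hN C hb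
      · exact hredX _ _ hσne hσred rfl
      · exact hredX _ _ hwne hwred rfl
      · exact hlenX _ _
      · exact hlenX _ _
      · rw [htake, htake]
      · rw [tkr_append _ (by omega : N - 1 ≤ (w.drop 1).length),
            tkr_append _ (by omega : N - 1 ≤ w.length)]
        show (w.drop 1).drop ((w.drop 1).length - (N-1)) = w.drop (w.length - (N-1))
        rw [hσlen, hwlen]
        simp [show N - 1 - (N-1) = 0 from by omega, show N - (N-1) = 1 from by omega]
    rw [hfσ, hfπ]
    linarith
  -- assembly
  have hterm : ∀ u ∈ WL n (N-1), ∀ v, (hfun u • (rgrp u - lgrp u)) v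
      = (∑ s ∈ Finset.univ.filter (fun s => Red (s :: u)), hfun u * (occ (s :: u) v : ℚ))
        - (∑ s ∈ Finset.univ.filter (fun s => Red (u ++ [s])), hfun u * (occ (u ++ [s]) v : ℚ)) := by
    intro u hu v
    have h1 : ∀ s ∈ Finset.univ.filter (fun s => Red (s :: u)),
        cnt (s :: u) v = (occ (s :: u) v : ℚ) := fun s _ => if_neg (by simp)
    have h2 : ∀ s ∈ Finset.univ.filter (fun s => Red (u ++ [s])),
        cnt (u ++ [s]) v = (occ (u ++ [s]) v : ℚ) := fun s _ => if_neg (by simp)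
    simp only [Pi.smul_apply, Pi.sub_apply, smul_eq_mul, rgrp, lgrp]
    rw [Finset.sum_congr rfl h1, Finset.sum_congr rfl h2, ← Finset.mul_sum, ← Finset.mul_sum]
    ring
  have e1 : ∀ v, ∑ u ∈ WL n (N-1), ∑ s ∈ Finset.univ.filter (fun s => Red (s :: u)),
        hfun u * (occ (s :: u) v : ℚ)
      = ∑ w ∈ WL n N, hfun (w.drop 1) * (occ w v : ℚ) := by
    intro v
    rw [Finset.sum_sigma']
    refine Finset.sum_nbij' (i := fun p => p.2 :: p.1) (j := fun w => ⟨w.tail, w.headI⟩)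
      ?_ ?_ ?_ ?_ ?_
    · rintro ⟨u, s⟩ hp
      rw [Finset.mem_sigma] at hp
      obtain ⟨hu, hs⟩ := hp
      rw [Finset.mem_filter] at hs
      rw [mem_WL]
      refine ⟨?_, hs.2⟩
      rw [List.length_cons, (mem_WL.mp hu).1]; omega
    · intro w hw
      obtain ⟨hwl, hwr⟩ := mem_WL.mp hw
      have hwne : w ≠ [] := by intro h; rw [h] at hwl; simp at hwl; omega
      rw [Finset.mem_sigma]
      constructor
      · rw [mem_WL]
        refine ⟨by rw [List.length_tail, hwl], hwr.infix (List.tail_suffix w).isInfix⟩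
      · rw [Finset.mem_filter]
        refine ⟨Finset.mem_univ _, ?_⟩
        rw [show w.headI :: w.tail = w from List.cons_head!_tail hwne]
        exact hwr
    · rintro ⟨u, s⟩ _
      rfl
    · intro w hw
      obtain ⟨hwl, hwr⟩ := mem_WL.mp hw
      have hwne : w ≠ [] := by intro h; rw [h] at hwl; simp at hwl; omega
      exact List.cons_head!_tail hwne
    · rintro ⟨u, s⟩ _
      rfl
  have e2 : ∀ v, ∑ u ∈ WL n (N-1), ∑ s ∈ Finset.univ.filter (fun s => Red (u ++ [s])),
        hfun u * (occ (u ++ [s]) v : ℚ)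
      = ∑ w ∈ WL n N, hfun (w.take (N-1)) * (occ w v : ℚ) := by
    intro v
    rw [Finset.sum_sigma']
    refine Finset.sum_nbij' (i := fun p => p.1 ++ [p.2]) (j := fun w => ⟨w.dropLast, w.getLastD default⟩)
      ?_ ?_ ?_ ?_ ?_
    · rintro ⟨u, s⟩ hp
      rw [Finset.mem_sigma] at hp
      obtain ⟨hu, hs⟩ := hp
      rw [Finset.mem_filter] at hs
      rw [mem_WL]
      refine ⟨?_, hs.2⟩
      rw [List.length_append, (mem_WL.mp hu).1]
      simp; omega
    · intro w hw
      obtain ⟨hwl, hwr⟩ := mem_WL.mp hw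
      have hwne : w ≠ [] := by intro h; rw [h] at hwl; simp at hwl; omega
      have hrec : w.dropLast ++ [w.getLastD default] = w := by
        have h2 := List.dropLast_append_getLast hwne
        simp [List.getLastD_eq_getLast?, List.getLast?_eq_getLast hwne, h2]
      rw [Finset.mem_sigma]
      constructor
      · rw [mem_WL]
        refine ⟨by rw [List.length_dropLast, hwl], hwr.infix (List.dropLast_prefix w).isInfix⟩
      · rw [Finset.mem_filter]
        refine ⟨Finset.mem_univ _, ?_⟩
        rw [hrec]
        exact hwr
    · rintro ⟨u, s⟩ _
      simp only [List.dropLast_concat, List.getLastD_concat]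
    · intro w hw
      obtain ⟨hwl, hwr⟩ := mem_WL.mp hw
      have hwne : w ≠ [] := by intro h; rw [h] at hwl; simp at hwl; omega
      have h2 := List.dropLast_append_getLast hwne
      simp [List.getLastD_eq_getLast?, List.getLast?_eq_getLast hwne, h2]
    · rintro ⟨u, s⟩ hp
      rw [Finset.mem_sigma] at hp
      have hul : u.length = N - 1 := (mem_WL.mp hp.1).1
      rw [List.take_left' hul]
  have hassem : (fun v => GG n N μ v) = ∑ u ∈ WL n (N-1), hfun u • (rgrp u - lgrp u) := by
    funext v
    rw [Finset.sum_apply]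
    rw [Finset.sum_congr rfl (fun u hu => hterm u hu v), Finset.sum_sub_distrib, e1 v, e2 v,
      ← Finset.sum_sub_distrib]
    unfold GG
    refine Finset.sum_congr rfl ?_
    intro w hw
    obtain ⟨hwl, hwr⟩ := mem_WL.mp hw
    rw [hedge w hwr hwl]
    ring
  rw [hassem]
  apply Submodule.sum_mem
  intro u hu
  apply Submodule.smul_mem
  have hru := (mem_WL.mp hu).2
  exact Submodule.sub_mem _
    (Submodule.subset_span (Or.inr ⟨u, hru, rfl⟩))
    (Submodule.subset_span (Or.inl ⟨u, hru, rfl⟩))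

end MAIN


section FINAL
variable {n : ℕ}

/-- The submodule of functions bounded on reduced words. -/
def Bdd (n : ℕ) : Submodule ℚ (List (Fin n × Bool) → ℚ) where
  carrier := {f | ∃ C : ℚ, ∀ v, Red v → |f v| ≤ C}
  add_mem' := by
    rintro f g ⟨C1, h1⟩ ⟨C2, h2⟩
    exact ⟨C1 + C2, fun v hv => le_trans (abs_add_le _ _) (add_le_add (h1 v hv) (h2 v hv))⟩
  zero_mem' := ⟨0, fun v _ => by simp⟩
  smul_mem' := by
    rintro c f ⟨C, h⟩
    refine ⟨|c| * C, fun v hv => ?_⟩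
    have : |c * f v| = |c| * |f v| := abs_mul _ _
    simp only [Pi.smul_apply, smul_eq_mul]
    rw [this]
    have hc : (0:ℚ) ≤ |c| := abs_nonneg c
    exact mul_le_mul_of_nonneg_left (h v hv) hc

lemma lgrp_fun_eq (w : List (Fin n × Bool)) :
    lgrp w = cnt w - ∑ s ∈ Finset.univ.filter (fun s => Red (s :: w)), cnt (s :: w) := by
  funext v
  simp [lgrp, Finset.sum_apply]

lemma rgrp_fun_eq (w : List (Fin n × Bool)) :
    rgrp w = cnt w - ∑ s ∈ Finset.univ.filter (fun s => Red (w ++ [s])), cnt (w ++ [s]) := by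
  funext v
  simp [rgrp, Finset.sum_apply]

lemma cnt_fun_eq (w : List (Fin n × Bool)) :
    cnt w = lgrp w + ∑ s ∈ Finset.univ.filter (fun s => Red (s :: w)), cnt (s :: w) := by
  rw [lgrp_fun_eq]; ring

end FINAL

/-- K(F_n), the subspace of bounded counting functions on the free group, is spanned by
the extension relations l_w and r_w over all reduced words w. -/
theorem stmt_14 (n : ℕ) (hn : 2 ≤ n) (f : List (Fin n × Bool) → ℚ) :
    (f ∈ Submodule.span ℚ {g : List (Fin n × Bool) → ℚ | ∃ w, Red w ∧ g = cnt w} ∧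
      ∃ C : ℚ, ∀ v : List (Fin n × Bool), Red v → |f v| ≤ C) ↔
    f ∈ Submodule.span ℚ
      ({g : List (Fin n × Bool) → ℚ | ∃ w, Red w ∧ g = lgrp w} ∪
       {g : List (Fin n × Bool) → ℚ | ∃ w, Red w ∧ g = rgrp w}) := by
  set SL := {g : List (Fin n × Bool) → ℚ | ∃ w, Red w ∧ g = lgrp w} with hSL
  set SR := {g : List (Fin n × Bool) → ℚ | ∃ w, Red w ∧ g = rgrp w} with hSR
  set Scnt := {g : List (Fin n × Bool) → ℚ | ∃ w, Red w ∧ g = cnt w} with hScnt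
  have hSLR_cnt : SL ∪ SR ⊆ (Submodule.span ℚ Scnt : Set _) := by
    rintro g (⟨w, hw, rfl⟩ | ⟨w, hw, rfl⟩)
    · rw [lgrp_fun_eq]
      refine Submodule.sub_mem _ (Submodule.subset_span ⟨w, hw, rfl⟩) ?_
      exact Submodule.sum_mem _ (fun s hs =>
        Submodule.subset_span ⟨s :: w, (Finset.mem_filter.mp hs).2, rfl⟩)
    · rw [rgrp_fun_eq]
      refine Submodule.sub_mem _ (Submodule.subset_span ⟨w, hw, rfl⟩) ?_
      exact Submodule.sum_mem _ (fun s hs =>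
        Submodule.subset_span ⟨w ++ [s], (Finset.mem_filter.mp hs).2, rfl⟩)
  have hSLR_bdd : SL ∪ SR ⊆ (Bdd n : Set _) := by
    rintro g (⟨w, hw, rfl⟩ | ⟨w, hw, rfl⟩)
    · exact ⟨1, fun v hv => abs_lgrp_le hw hv⟩
    · exact ⟨1, fun v hv => abs_rgrp_le hw hv⟩
  constructor
  · -- forward
    rintro ⟨hspan, C, hC⟩
    have hSeq : Scnt = cnt '' {w : List (Fin n × Bool) | Red w} := by
      ext g
      constructor
      · rintro ⟨w, h1, h2⟩; exact ⟨w, h1, h2.symm⟩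
      · rintro ⟨w, h1, h2⟩; exact ⟨w, h1, h2.symm⟩
    rw [hSeq, Finsupp.mem_span_image_iff_linearCombination] at hspan
    obtain ⟨l, hlsupp, hlf⟩ := hspan
    rw [Finsupp.mem_supported] at hlsupp
    set N := max 2 (l.support.sup List.length) with hNdef
    have hN2 : 2 ≤ N := le_max_left _ _
    have hlen : ∀ w ∈ l.support, w.length ≤ N :=
      fun w hw => le_trans (Finset.le_sup hw) (le_max_right _ _)
    set T := Submodule.span ℚ
      ((SL ∪ SR) ∪ (cnt '' {w : List (Fin n × Bool) | Red w ∧ w.length = N})) with hT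
    have claimA : ∀ k : ℕ, ∀ w : List (Fin n × Bool), Red w → w.length + k = N →
        cnt w ∈ T := by
      intro k
      induction k with
      | zero =>
        intro w hw hlw
        exact Submodule.subset_span (Or.inr ⟨w, ⟨hw, by omega⟩, rfl⟩)
      | succ k ih =>
        intro w hw hlw
        rw [cnt_fun_eq]
        refine Submodule.add_mem _ (Submodule.subset_span (Or.inl (Or.inl ⟨w, hw, rfl⟩))) ?_
        refine Submodule.sum_mem _ (fun s hs => ?_)
        refine ih (s :: w) (Finset.mem_filter.mp hs).2 ?_
        rw [List.length_cons]; omega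
    have hfT : f ∈ T := by
      rw [← hlf, Finsupp.linearCombination_apply, Finsupp.sum]
      refine Submodule.sum_mem _ (fun w hw => ?_)
      refine Submodule.smul_mem _ _ ?_
      exact claimA (N - w.length) w (hlsupp hw) (by have := hlen w hw; omega)
    rw [hT, Submodule.span_union, Submodule.mem_sup] at hfT
    obtain ⟨q, hq, g, hg, hqg⟩ := hfT
    have hqbdd : q ∈ Bdd n := by
      have : Submodule.span ℚ (SL ∪ SR) ≤ Bdd n := Submodule.span_le.mpr hSLR_bdd
      exact this hq
    obtain ⟨Cq, hCq⟩ := hqbdd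
    have hgbdd : ∀ v, Red v → |g v| ≤ C + Cq := by
      intro v hv
      have : g v = f v - q v := by
        have := congrFun hqg v
        simp only [Pi.add_apply] at this
        linarith
      rw [this]
      exact le_trans (abs_sub _ _) (add_le_add (hC v hv) (hCq v hv))
    -- extract finsupp for g
    rw [show (cnt '' {w : List (Fin n × Bool) | Red w ∧ w.length = N})
        = cnt '' {w : List (Fin n × Bool) | Red w ∧ w.length = N} from rfl,
      Finsupp.mem_span_image_iff_linearCombination] at hg
    obtain ⟨m, hmsupp, hmg⟩ := hg
    rw [Finsupp.mem_supported] at hmsupp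
    have hGg : (fun v => GG n N (fun w => m w) v) = g := by
      funext v
      rw [← hmg, Finsupp.linearCombination_apply, Finsupp.sum, Finset.sum_apply]
      unfold GG
      rw [Finset.sum_subset (show m.support ⊆ WL n N from fun w hw =>
        mem_WL.mpr ⟨(hmsupp hw).2, (hmsupp hw).1⟩)]
      · refine Finset.sum_congr rfl (fun w hw => ?_)
        have hwne : w ≠ [] := by
          intro h
          have := (mem_WL.mp hw).1
          rw [h] at this; simp at this; omega
        simp only [Pi.smul_apply, smul_eq_mul, cnt, if_neg hwne]
      · intro w _ hw
        have : m w = 0 := Finsupp.notMem_support_iff.mp hw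
        simp [this]
    have hgmem : g ∈ Submodule.span ℚ (SL ∪ SR) := by
      rw [← hGg]
      have hGg' : ∀ v, GG n N (fun w => m w) v = g v := fun v => congrFun hGg v
      exact main_span hn hN2 (fun w => m w) (C + Cq)
        (fun v hv => by rw [hGg' v]; exact hgbdd v hv)
    rw [← hqg]
    exact Submodule.add_mem _ hq hgmem
  · -- backward
    intro hf
    constructor
    · exact Submodule.span_le.mpr hSLR_cnt hf
    · have : Submodule.span ℚ (SL ∪ SR) ≤ Bdd n := Submodule.span_le.mpr hSLR_bdd
      exact this hf
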